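/- arXiv:0906.5045 — 5 statements merged into one kernel-verified Lean document; each statement's English description precedes it below -/
import Mathlib

section
/- Let K : ℝ → ℝ be continuous, bounded by a non-negative even integrable function, and let bₙ → 0 with n·bₙ → ∞. Then bₙ Σ_{v=1}^{n-1} |K(bₙ v)| converges to ∫_0^∞ |K(x)| dx as n → ∞. -/
open MeasureTheory Filter Set

/-- Kernel Riemann-sum convergence: bₙ Σ_{v=1}^{n-1} |K(bₙ v)| → ∫_0^∞ |K(x)| dx. -/
theorem kernel_riemann_sum (K K₁ : ℝ → ℝ) (hK : Continuous K)
    (hK₁_nonneg : ∀ x, 0 ≤ K₁ x) (hK₁_even : ∀ x, K₁ (-x) = K₁ x)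
    (hK₁_int : Integrable K₁) (hK₁_anti : AntitoneOn K₁ (Ici (0 : ℝ)))
    (hbound : ∀ x, |K x| ≤ K₁ x)
    (b : ℕ → ℝ) (hbpos : ∀ n, 0 < b n)
    (hb : Tendsto b atTop (nhds 0))
    (hnb : Tendsto (fun n : ℕ => (n : ℝ) * b n) atTop atTop) :
    Tendsto (fun n => b n * ∑ v ∈ Finset.Icc 1 (n - 1), |K (b n * (v : ℝ))|)
      atTop (nhds (∫ x in Ici (0 : ℝ), |K x|)) := by
  -- step function approximation
  set M : ℕ → ℝ := fun n => b n * ((n - 1 : ℕ) : ℝ) with hM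
  set g : ℕ → ℝ → ℝ := fun n x =>
    if x ≤ M n then |K (b n * ((⌈x / b n⌉ : ℤ) : ℝ))| else 0 with hgdef
  -- measurability
  have hmeas : ∀ n, Measurable (g n) := by
    intro n
    have hcast : Measurable (fun z : ℤ => (z : ℝ)) := measurable_of_countable _
    apply Measurable.ite (measurableSet_Iic)
    · exact (hK.measurable.comp
        (measurable_const.mul (hcast.comp
          (Int.measurable_ceil.comp (measurable_id.div_const _))))).abs
    · exact measurable_const
  -- ceil bounds
  have hceil_ge : ∀ n x, 0 < x → x ≤ b n * ((⌈x / b n⌉ : ℤ) : ℝ) := by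
    intro n x hx
    have h := Int.le_ceil (x / b n)
    calc x = b n * (x / b n) := by
          rw [mul_comm, div_mul_cancel₀ _ (hbpos n).ne']
    _ ≤ b n * ((⌈x / b n⌉ : ℤ) : ℝ) := by
        exact mul_le_mul_of_nonneg_left h (hbpos n).le
  have hceil_lt : ∀ n x, b n * ((⌈x / b n⌉ : ℤ) : ℝ) < x + b n := by
    intro n x
    have h := Int.ceil_lt_add_one (x / b n)
    calc b n * ((⌈x / b n⌉ : ℤ) : ℝ) < b n * (x / b n + 1) := by
          exact mul_lt_mul_of_pos_left h (hbpos n)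
    _ = x + b n := by
          rw [mul_add, mul_one, mul_comm, div_mul_cancel₀ _ (hbpos n).ne']
  -- domination
  have hdom : ∀ n, ∀ x ∈ Ioi (0:ℝ), ‖g n x‖ ≤ K₁ x := by
    intro n x hx
    simp only [hgdef]
    split_ifs with h
    · rw [Real.norm_eq_abs, abs_abs]
      refine (hbound _).trans ?_
      have h1 : x ≤ b n * ((⌈x / b n⌉ : ℤ) : ℝ) := hceil_ge n x hx
      exact hK₁_anti (mem_Ici.2 (le_of_lt hx)) (mem_Ici.2 (le_trans (le_of_lt hx) h1)) h1
    · simpa using hK₁_nonneg x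
  have hdomae : ∀ n, ∀ᵐ x ∂(volume.restrict (Ioi (0:ℝ))), ‖g n x‖ ≤ K₁ x := by
    intro n
    exact (ae_restrict_iff' measurableSet_Ioi).2 (Filter.Eventually.of_forall (hdom n))
  -- integrability
  have hint : ∀ n, IntegrableOn (g n) (Ioi (0:ℝ)) := by
    intro n
    refine Integrable.mono hK₁_int.integrableOn
      (hmeas n).aestronglyMeasurable.restrict ?_
    refine (hdomae n).mono fun x hx => hx.trans ?_
    rw [Real.norm_eq_abs]
    exact le_abs_self _
  -- M tends to infinity
  have hMtop : Tendsto M atTop atTop := by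
    have h1 : Tendsto (fun n : ℕ => (n : ℝ) * b n + (- b n)) atTop atTop :=
      hnb.atTop_add (hb.neg)
    apply h1.congr'
    filter_upwards [eventually_ge_atTop 1] with n hn
    have : ((n - 1 : ℕ) : ℝ) = (n : ℝ) - 1 := by
      push_cast [hn]; ring
    simp [hM, this]; ring
  -- pointwise convergence
  have hconv : ∀ x ∈ Ioi (0:ℝ), Tendsto (fun n => g n x) atTop (nhds (|K x|)) := by
    intro x hx
    simp only [mem_Ioi] at hx
    have hy : Tendsto (fun n => b n * ((⌈x / b n⌉ : ℤ) : ℝ)) atTop (nhds x) := by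
      apply tendsto_of_tendsto_of_tendsto_of_le_of_le' tendsto_const_nhds
        (by simpa using tendsto_const_nhds.add hb : Tendsto (fun n => x + b n) atTop (nhds x))
      · exact Filter.Eventually.of_forall fun n => hceil_ge n x hx
      · exact Filter.Eventually.of_forall fun n => (hceil_lt n x).le
    have h2 : Tendsto (fun n => |K (b n * ((⌈x / b n⌉ : ℤ) : ℝ))|) atTop (nhds (|K x|)) :=
      ((hK.tendsto x).comp hy).abs
    apply h2.congr'
    filter_upwards [hMtop.eventually_ge_atTop x] with n hn
    simp only [hgdef, if_pos hn]
  have hconvae : ∀ᵐ x ∂(volume.restrict (Ioi (0:ℝ))),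
      Tendsto (fun n => g n x) atTop (nhds (|K x|)) :=
    (ae_restrict_iff' measurableSet_Ioi).2 (Filter.Eventually.of_forall hconv)
  -- dominated convergence
  have hDCT : Tendsto (fun n => ∫ x in Ioi (0:ℝ), g n x) atTop
      (nhds (∫ x in Ioi (0:ℝ), |K x|)) := by
    exact tendsto_integral_of_dominated_convergence K₁
      (fun n => (hmeas n).aestronglyMeasurable.restrict) hK₁_int.integrableOn hdomae hconvae
  -- compute the integral of g n
  have hsum : ∀ n, ∫ x in Ioi (0:ℝ), g n x
      = b n * ∑ v ∈ Finset.Icc 1 (n - 1), |K (b n * (v : ℝ))| := by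
    intro n
    set N := n - 1 with hN
    set a : ℕ → ℝ := fun i => b n * i with ha
    have hMa : M n = a N := by simp [hM, ha]; exact Or.inl rfl
    have ha0 : a 0 = 0 := by simp [ha]
    have haM : 0 ≤ M n := by
      exact mul_nonneg (hbpos n).le (Nat.cast_nonneg _)
    -- on each piece, g n is constant
    have hpiece : ∀ i, i < N → EqOn (g n) (fun _ => |K (b n * ((i+1 : ℕ) : ℝ))|)
        (Ioc (a i) (a (i+1))) := by
      intro i hi x hx
      obtain ⟨hx1, hx2⟩ := hx
      have hxM : x ≤ M n := by
        rw [hMa]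
        refine hx2.trans ?_
        have : ((i + 1 : ℕ) : ℝ) ≤ (N : ℝ) := by exact_mod_cast hi
        exact mul_le_mul_of_nonneg_left this (hbpos n).le
      have hceil : ⌈x / b n⌉ = (i : ℤ) + 1 := by
        rw [Int.ceil_eq_iff]
        constructor
        · push_cast
          rw [lt_div_iff₀ (hbpos n)]
          simpa [ha, mul_comm] using hx1
        · push_cast
          rw [div_le_iff₀ (hbpos n)]
          simpa [ha, mul_comm] using hx2
      simp only [hgdef, if_pos hxM, hceil]
      push_cast
      ring_nf
    have hii : ∀ i, i < N → IntervalIntegrable (g n) volume (a i) (a (i+1)) := by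
      intro i hi
      rw [intervalIntegrable_iff]
      have hle : a i ≤ a (i+1) := by
        apply mul_le_mul_of_nonneg_left _ (hbpos n).le
        exact_mod_cast Nat.le_succ i
      rw [uIoc_of_le hle]
      exact (integrableOn_const measure_Ioc_lt_top.ne).congr_fun
        (fun x hx => (hpiece i hi hx).symm) measurableSet_Ioc
    have hval : ∀ i, i < N → ∫ x in (a i)..(a (i+1)), g n x
        = b n * |K (b n * ((i+1 : ℕ) : ℝ))| := by
      intro i hi
      have hle : a i ≤ a (i+1) := by
        apply mul_le_mul_of_nonneg_left _ (hbpos n).le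
        exact_mod_cast Nat.le_succ i
      rw [intervalIntegral.integral_of_le hle,
        setIntegral_congr_fun measurableSet_Ioc (hpiece i hi), setIntegral_const,
        measureReal_def, Real.volume_Ioc, smul_eq_mul]
      congr 1
      rw [ENNReal.toReal_ofReal (by linarith)]
      simp only [ha]
      push_cast
      ring
    have hadj := intervalIntegral.sum_integral_adjacent_intervals (a := a) (n := N) hii
    -- integral over Ioi 0 splits
    have hzero : ∫ x in Ioi (M n), g n x = 0 := by
      have heq : EqOn (g n) (fun _ => (0:ℝ)) (Ioi (M n)) := fun x hx => by
        simp only [hgdef, if_neg (not_le.2 (mem_Ioi.1 hx))]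
      rw [setIntegral_congr_fun measurableSet_Ioi heq, integral_zero]
    have hsplit : ∫ x in Ioi (0:ℝ), g n x = ∫ x in Ioc 0 (M n), g n x := by
      rw [← Ioc_union_Ioi_eq_Ioi haM,
        setIntegral_union (Ioc_disjoint_Ioi le_rfl) measurableSet_Ioi
          ((hint n).mono_set (Ioc_subset_Ioi_self))
          ((hint n).mono_set (Ioi_subset_Ioi haM)), hzero, add_zero]
    rw [hsplit, ← intervalIntegral.integral_of_le haM, hMa, ← ha0, ← hadj]
    rw [Finset.sum_congr rfl (fun i hi => hval i (Finset.mem_range.1 hi))]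
    rw [Finset.mul_sum]
    rw [show Finset.Icc 1 N = Finset.Ico 1 (N + 1) from by rw [Finset.Ico_add_one_right_eq_Icc],
      Finset.sum_Ico_eq_sum_range]
    simp only [Nat.add_sub_cancel]
    exact Finset.sum_congr rfl fun i _ => by rw [Nat.add_comm 1 i]
  have hIci : (∫ x in Ici (0:ℝ), |K x|) = ∫ x in Ioi (0:ℝ), |K x| :=
    integral_Ici_eq_integral_Ioi
  rw [hIci]
  exact hDCT.congr (fun n => hsum n)
end

section
/- Let φ : ℝ → ℝ be non-negative, integrable, and satisfy lim_{|λ|→∞} |λ|^p φ(λ) = A for some p > 1 and A > 0. If ρₙ → ∞, then for each fixed λ, ρₙ^p · Σ_{l=1}^{∞} φ(λ + 2π l ρₙ) converges to (A/(2π)^p) · Σ_{l=1}^{∞} l^{-p} as n → ∞. -/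
open MeasureTheory Filter Real

lemma summable_shift_rpow {p : ℝ} (hp : 1 < p) :
    Summable (fun l : ℕ => ((l : ℝ) + 1) ^ (-p)) := by
  have h : Summable (fun n : ℕ => (n : ℝ) ^ (-p)) :=
    Real.summable_nat_rpow.mpr (by linarith)
  have h2 := h.comp_injective Nat.succ_injective
  convert h2 using 2 with l
  · rfl
  simp [Function.comp, Nat.succ_eq_add_one]

/-- Aliasing-tail convergence: ρₙ^p Σ_{l≥1} φ(λ + 2π l ρₙ) → (A/(2π)^p) Σ_{l≥1} l^{-p}. -/
theorem aliasing_tail_limit (φ : ℝ → ℝ) (hφ_nonneg : ∀ x, 0 ≤ φ x)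
    (hφ_int : Integrable φ)
    (p A : ℝ) (hp : 1 < p) (hA : 0 < A)
    (htail : ∀ ε > (0 : ℝ), ∃ M : ℝ, ∀ x : ℝ, M ≤ |x| → abs (|x| ^ p * φ x - A) < ε)
    (ρ : ℕ → ℝ) (hρpos : ∀ n, 0 < ρ n) (hρ : Tendsto ρ atTop atTop)
    (lam : ℝ) :
    Tendsto (fun n => ρ n ^ p * ∑' l : ℕ, φ (lam + 2 * π * ((l : ℝ) + 1) * ρ n))
      atTop (nhds (A / (2 * π) ^ p * ∑' l : ℕ, ((l : ℝ) + 1) ^ (-p))) := by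
  have hπ : (0:ℝ) < π := pi_pos
  have hsum : Summable (fun l : ℕ => ((l : ℝ) + 1) ^ (-p)) := summable_shift_rpow hp
  obtain ⟨M, hM⟩ := htail A hA
  -- the terms
  set f : ℕ → ℕ → ℝ := fun n l => ρ n ^ p * φ (lam + 2 * π * ((l : ℝ) + 1) * ρ n) with hf
  set g : ℕ → ℝ := fun l => A / (2 * π) ^ p * ((l : ℝ) + 1) ^ (-p) with hg
  -- pointwise limits
  have hab : ∀ l : ℕ, Tendsto (f · l) atTop (nhds (g l)) := by
    intro l
    set L : ℝ := 2 * π * ((l : ℝ) + 1) with hL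
    have hl1 : (0:ℝ) < (l : ℝ) + 1 := by positivity
    have hLpos : 0 < L := by positivity
    set x : ℕ → ℝ := fun n => lam + L * ρ n with hx
    have hxt : Tendsto x atTop atTop :=
      tendsto_atTop_add_const_left _ lam (hρ.const_mul_atTop hLpos)
    have hxpos : ∀ᶠ n in atTop, 0 < x n := hxt.eventually_gt_atTop 0
    -- first factor
    have h1 : Tendsto (fun n => |x n| ^ p * φ (x n)) atTop (nhds A) := by
      rw [Metric.tendsto_nhds]
      intro ε hε
      obtain ⟨M', hM'⟩ := htail ε hε
      filter_upwards [hxt.eventually_ge_atTop M'] with n hn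
      rw [Real.dist_eq]
      exact hM' _ (hn.trans (le_abs_self _))
    -- second factor
    have h2 : Tendsto (fun n => ρ n / |x n|) atTop (nhds (1 / L)) := by
      have hd : Tendsto (fun n => lam / ρ n + L) atTop (nhds L) := by
        have := (tendsto_const_nhds (x := lam) (f := atTop (α := ℕ))).div_atTop hρ
        simpa using this.add_const L
      have hinv : Tendsto (fun n => 1 / (lam / ρ n + L)) atTop (nhds (1 / L)) :=
        tendsto_const_nhds.div hd hLpos.ne'
      refine hinv.congr' ?_
      filter_upwards [hxpos] with n hxn
      have hρn := hρpos n
      rw [abs_of_pos hxn, hx]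
      field_simp
    have h3 : Tendsto (fun n => (ρ n / |x n|) ^ p * (|x n| ^ p * φ (x n))) atTop
        (nhds ((1 / L) ^ p * A)) :=
      (h2.rpow_const (Or.inl (by positivity))).mul h1
    have heq : (fun n => (ρ n / |x n|) ^ p * (|x n| ^ p * φ (x n))) =ᶠ[atTop] (f · l) := by
      filter_upwards [hxpos] with n hxn
      have hρn := (hρpos n).le
      have hxn' : (0:ℝ) < |x n| := abs_pos.mpr hxn.ne'
      rw [Real.div_rpow hρn hxn'.le]
      have hxp : (0:ℝ) < |x n| ^ p := Real.rpow_pos_of_pos hxn' p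
      have harg : lam + 2 * π * ((l:ℝ) + 1) * ρ n = x n := rfl
      simp only [hf, harg]
      field_simp
    have hval : (1 / L) ^ p * A = g l := by
      have h2π : (0:ℝ) < 2 * π := by positivity
      simp only [hg, hL]
      rw [one_div, Real.inv_rpow (by positivity), Real.mul_rpow h2π.le hl1.le,
        Real.rpow_neg hl1.le]
      have hπp : (0:ℝ) < (2 * π) ^ p := Real.rpow_pos_of_pos h2π p
      have hlp : (0:ℝ) < ((l:ℝ) + 1) ^ p := Real.rpow_pos_of_pos hl1 p
      field_simp
    rw [← hval]
    exact h3.congr' heq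
  -- domination
  have h_bound : ∀ᶠ n in atTop, ∀ l : ℕ, ‖f n l‖ ≤ (2 * A / π ^ p) * ((l : ℝ) + 1) ^ (-p) := by
    filter_upwards [hρ.eventually_ge_atTop (max M 1), hρ.eventually_ge_atTop (-lam / π)]
      with n hn1 hn2
    intro l
    have hρn := hρpos n
    have hl1 : (0:ℝ) < (l : ℝ) + 1 := by positivity
    set x : ℝ := lam + 2 * π * ((l : ℝ) + 1) * ρ n with hx
    have hlam : -lam ≤ π * ρ n := by
      rw [div_le_iff₀ hπ] at hn2; linarith [mul_comm (ρ n) π]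
    have hπl : (0:ℝ) ≤ π * (l:ℝ) * ρ n := by positivity
    have hmid : π * ρ n ≤ π * ((l : ℝ) + 1) * ρ n := by nlinarith
    have hkey : π * ((l : ℝ) + 1) * ρ n ≤ x := by rw [hx]; nlinarith
    have hxM : max M 1 ≤ x := by
      have h1 : ρ n ≤ π * ρ n := by nlinarith [pi_gt_three]
      linarith
    have hxpos : (0:ℝ) < x := lt_of_lt_of_le (lt_max_of_lt_right one_pos) hxM
    have hφx : |x| ^ p * φ x < 2 * A := by
      have := hM x (by rw [abs_of_pos hxpos]; exact le_trans (le_max_left _ _) hxM)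
      have := abs_lt.mp this
      linarith [this.2]
    rw [abs_of_pos hxpos] at hφx
    have hxp : (0:ℝ) < x ^ p := Real.rpow_pos_of_pos hxpos p
    have hφle : φ x ≤ 2 * A / x ^ p := by
      rw [le_div_iff₀ hxp]; nlinarith [hφ_nonneg x]
    -- bound the term
    have hbase : (0:ℝ) < π * ((l : ℝ) + 1) * ρ n := by positivity
    have hmono : (π * ((l : ℝ) + 1) * ρ n) ^ p ≤ x ^ p :=
      Real.rpow_le_rpow hbase.le hkey (by linarith)
    have hterm : ρ n ^ p * φ x ≤ (2 * A / π ^ p) * ((l : ℝ) + 1) ^ (-p) := by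
      have hρp : (0:ℝ) < ρ n ^ p := Real.rpow_pos_of_pos hρn p
      have h1 : ρ n ^ p * φ x ≤ ρ n ^ p * (2 * A / x ^ p) :=
        mul_le_mul_of_nonneg_left hφle hρp.le
      have h2 : ρ n ^ p * (2 * A / x ^ p) ≤ ρ n ^ p * (2 * A / (π * ((l : ℝ) + 1) * ρ n) ^ p) := by
        apply mul_le_mul_of_nonneg_left _ hρp.le
        apply div_le_div_of_nonneg_left (by positivity) (by positivity) hmono
      have h3 : ρ n ^ p * (2 * A / (π * ((l : ℝ) + 1) * ρ n) ^ p)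
          = (2 * A / π ^ p) * ((l : ℝ) + 1) ^ (-p) := by
        rw [Real.mul_rpow (by positivity) hρn.le, Real.mul_rpow hπ.le hl1.le,
          Real.rpow_neg hl1.le]
        have hπp : (0:ℝ) < π ^ p := Real.rpow_pos_of_pos hπ p
        have hlp : (0:ℝ) < ((l:ℝ) + 1) ^ p := Real.rpow_pos_of_pos hl1 p
        field_simp
      linarith
    have hfnl : 0 ≤ f n l := by
      have := Real.rpow_pos_of_pos hρn p
      exact mul_nonneg this.le (hφ_nonneg _)
    rw [Real.norm_eq_abs, abs_of_nonneg hfnl]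
    exact hterm
  have hbsum : Summable (fun l : ℕ => (2 * A / π ^ p) * ((l : ℝ) + 1) ^ (-p)) :=
    hsum.mul_left _
  have := tendsto_tsum_of_dominated_convergence hbsum hab h_bound
  have hmain : Tendsto (fun n => ∑' l : ℕ, f n l) atTop (nhds (∑' l : ℕ, g l)) := this
  have hfac : (∑' l : ℕ, g l) = A / (2 * π) ^ p * ∑' l : ℕ, ((l : ℝ) + 1) ^ (-p) := by
    rw [hg]; exact tsum_mul_left
  rw [← hfac]
  refine hmain.congr' ?_
  filter_upwards with n
  rw [hf]
  simp only
  rw [tsum_mul_left]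
end

section
/- Let p, q > 1. Consider minimizing over positive sequences ρₙ = n^a and bₙ = n^{-β} (with a ∈ (0,1), β ∈ (0,1)) the maximum of the four rates (ρₙbₙ)^{2q}, (ρₙ/n)^2, ρₙ^{-2p}, and (n bₙ)^{-1}. The minimal achievable order is n^{-2pq/(p+q+2pq)}, attained at a = q/(p+q+2pq) and β = (p+q)/(p+q+2pq). -/
/-- Optimal rate exponents: the maximum over admissible (a, β) of
min(2q(β−a), 2(1−a), 2pa, 1−β) equals 2pq/(p+q+2pq), attained at
a = q/(p+q+2pq) and β = (p+q)/(p+q+2pq). -/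
theorem optimal_rate_exponents (p q : ℝ) (hp : 1 < p) (hq : 1 < q) :
    (min (min (2 * q * ((p + q) / (p + q + 2 * p * q) - q / (p + q + 2 * p * q)))
              (2 * (1 - q / (p + q + 2 * p * q))))
         (min (2 * p * (q / (p + q + 2 * p * q)))
              (1 - (p + q) / (p + q + 2 * p * q)))
        = 2 * p * q / (p + q + 2 * p * q)) ∧
    (∀ a β : ℝ, 0 < a → a < 1 → 0 < β → β < 1 →
      min (min (2 * q * (β - a)) (2 * (1 - a))) (min (2 * p * a) (1 - β))
        ≤ 2 * p * q / (p + q + 2 * p * q)) := by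
  have hD : 0 < p + q + 2 * p * q := by nlinarith
  have hDne : (p + q + 2 * p * q) ≠ 0 := ne_of_gt hD
  constructor
  · have e1 : 2 * q * ((p + q) / (p + q + 2 * p * q) - q / (p + q + 2 * p * q))
        = 2 * p * q / (p + q + 2 * p * q) := by field_simp; ring
    have e3 : 2 * p * (q / (p + q + 2 * p * q)) = 2 * p * q / (p + q + 2 * p * q) := by
      field_simp
    have e4 : 1 - (p + q) / (p + q + 2 * p * q) = 2 * p * q / (p + q + 2 * p * q) := by
      field_simp
      ring
    have e2 : 2 * p * q / (p + q + 2 * p * q) ≤ 2 * (1 - q / (p + q + 2 * p * q)) := by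
      have e : 2 * (1 - q / (p + q + 2 * p * q)) = (2 * p + 4 * p * q) / (p + q + 2 * p * q) := by
        field_simp; ring
      rw [e, div_le_div_iff₀ hD hD]
      nlinarith [mul_pos hD (show (0:ℝ) < 2 * p + 2 * p * q by nlinarith)]
    rw [e1, e3, e4, min_eq_left e2, min_self, min_self]
  · intro a β ha ha1 hb hb1
    by_contra h
    push_neg at h
    simp only [lt_min_iff] at h
    obtain ⟨⟨h1, h2⟩, h3, h4⟩ := h
    rw [div_lt_iff₀ hD] at h1 h3 h4
    have k1 := mul_lt_mul_of_pos_left h1 (show (0:ℝ) < p by linarith)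
    have k3 := mul_lt_mul_of_pos_left h3 (show (0:ℝ) < q by linarith)
    have k4 := mul_lt_mul_of_pos_left h4 (show (0:ℝ) < 2 * p * q by nlinarith)
    nlinarith [k1, k3, k4]
end

section
/- Let g₁, g₂, g₃ : ℝ → ℝ be continuous, even, non-negative, integrable, and non-increasing on [0,∞). If ρₙ → ∞ and n/ρₙ → ∞, then (1/ρₙ³) Σ_{v₁=1}^{n−1} Σ_{v₂=1}^{n−1} Σ_{u=−(n−1)}^{n−1} g₁(v₁/ρₙ) g₂(u/ρₙ) g₃((u+v₂)/ρₙ) converges to (∫_0^∞ g₁) · ∫_0^∞ [∫_{−∞}^{∞} g₂(u) g₃(u+v) du] dv as n → ∞. -/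
open MeasureTheory Filter Set

lemma mem_box {r : ℝ} (hr : 0 < r) (k : ℤ) (y : ℝ) :
    y ∈ Ioc (((k:ℝ)-1)/r) ((k:ℝ)/r) ↔ ⌈r * y⌉ = k := by
  rw [mem_Ioc, Int.ceil_eq_iff, div_lt_iff₀ hr, le_div_iff₀ hr]
  constructor <;> rintro ⟨h1, h2⟩ <;> constructor <;> nlinarith

lemma eval_int {r : ℝ} (hr : 0 < r) (a b : ℤ) (d : ℤ → ℝ) (y : ℝ) :
    ∑ k ∈ Finset.Icc a b, (Ioc (((k:ℝ)-1)/r) ((k:ℝ)/r)).indicator (fun _ => d k) y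
      = if ⌈r * y⌉ ∈ Finset.Icc a b then d ⌈r * y⌉ else 0 := by
  rw [← Finset.sum_ite_eq (Finset.Icc a b) ⌈r * y⌉ d]
  refine Finset.sum_congr rfl fun k hk => ?_
  rw [Set.indicator_apply]
  exact if_congr (by rw [mem_box hr]) rfl rfl

lemma integ_box {r : ℝ} (hr : 0 < r) (k : ℤ) (c : ℝ) :
    ∫ x, (Ioc (((k:ℝ)-1)/r) ((k:ℝ)/r)).indicator (fun _ => c) x = c / r := by
  rw [integral_indicator_const c measurableSet_Ioc, Measure.real, Real.volume_Ioc]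
  have : (k:ℝ)/r - ((k:ℝ)-1)/r = 1/r := by field_simp; ring
  rw [this, ENNReal.toReal_ofReal (by positivity), smul_eq_mul]
  ring

lemma intble_box {r : ℝ} (hr : 0 < r) (k : ℤ) (c : ℝ) :
    Integrable ((Ioc (((k:ℝ)-1)/r) ((k:ℝ)/r)).indicator (fun _ => c)) := by
  rw [integrable_indicator_iff measurableSet_Ioc]
  exact integrableOn_const (by rw [Real.volume_Ioc]; exact ENNReal.ofReal_ne_top)

lemma gev_abs {g : ℝ → ℝ} (he : ∀ x, g (-x) = g x) (x : ℝ) : g x = g |x| := by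
  rcases le_or_gt 0 x with h | h
  · rw [abs_of_nonneg h]
  · rw [abs_of_neg h, ← he]

lemma comp_bound {g : ℝ → ℝ} (he : ∀ x, g (-x) = g x) (ha : AntitoneOn g (Ici 0))
    {c y u : ℝ} (h : |y - u| ≤ c) : g y ≤ g (max (|u| - c) 0) := by
  have h1 : max (|u| - c) 0 ≤ |y| := by
    have h2 := abs_sub_abs_le_abs_sub u y
    rw [abs_sub_comm] at h2
    have : |u| - c ≤ |y| := by linarith
    exact max_le this (abs_nonneg y)
  rw [gev_abs he y]
  exact ha (mem_Ici.2 (le_max_right _ _)) (mem_Ici.2 ((le_max_right _ _).trans h1)) h1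

lemma G_integrable {g : ℝ → ℝ} (hc : Continuous g) (he : ∀ x, g (-x) = g x)
    (hnn : ∀ x, 0 ≤ g x) (hint : Integrable g) {c : ℝ} (hcpos : 0 ≤ c) :
    Integrable (fun x => g (max (|x| - c) 0)) := by
  have hmeas : AEStronglyMeasurable (fun x : ℝ => g (max (|x| - c) 0)) volume :=
    (hc.comp ((continuous_abs.sub continuous_const).max continuous_const)).aestronglyMeasurable
  refine Integrable.mono' (g := fun x => g (x - c) + g (x + c) + (Icc (-c) c).indicator (fun _ => g 0) x) ?_ hmeas ?_
  · refine Integrable.add (Integrable.add ?_ ?_) ?_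
    · exact hint.comp_sub_right c
    · exact hint.comp_add_right c
    · rw [integrable_indicator_iff measurableSet_Icc]
      exact integrableOn_const (by rw [Real.volume_Icc]; exact ENNReal.ofReal_ne_top)
  · refine ae_of_all _ fun x => ?_
    rw [Real.norm_eq_abs, abs_of_nonneg (hnn _)]
    have hin : (0:ℝ) ≤ (Icc (-c) c).indicator (fun _ => g 0) x :=
      Set.indicator_nonneg (fun _ _ => hnn 0) x
    rcases le_or_gt (|x|) c with h | h
    · have hm : max (|x| - c) 0 = 0 := max_eq_right (by linarith)
      rw [hm, Set.indicator_of_mem (by rw [mem_Icc, ← abs_le]; exact h)]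
      have := hnn (x - c); have := hnn (x + c); linarith
    · have hmax : max (|x| - c) 0 = |x| - c := max_eq_left (by linarith)
      rw [hmax]
      rcases le_or_gt 0 x with hx | hx
      · rw [abs_of_nonneg hx]
        have := hnn (x + c)
        linarith
      · rw [abs_of_neg hx]
        have hgg : g (-x - c) = g (x + c) := by rw [← he (x + c)]; ring_nf
        rw [hgg]
        have := hnn (x - c)
        linarith

lemma shear_integrable {f g : ℝ → ℝ} (hf : Integrable f) (hg : Integrable g) :
    Integrable (fun p : ℝ × ℝ => f p.2 * g (p.2 + p.1)) (volume : Measure (ℝ × ℝ)) := by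
  rw [MeasureTheory.Measure.volume_eq_prod]
  have base : Integrable (fun z : ℝ × ℝ => f z.1 * g z.2) ((volume : Measure ℝ).prod volume) :=
    hf.mul_prod hg
  have hskew : MeasurePreserving (fun q : ℝ × ℝ => (q.1, q.1 + q.2))
      ((volume : Measure ℝ).prod volume) ((volume : Measure ℝ).prod volume) := by
    refine MeasureTheory.MeasurePreserving.skew_product (MeasurePreserving.id _)
      (measurable_fst.add measurable_snd) ?_
    exact ae_of_all _ fun x => map_add_left_eq_self volume x
  have hT : MeasurePreserving (fun p : ℝ × ℝ => (p.2, p.2 + p.1))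
      ((volume : Measure ℝ).prod volume) ((volume : Measure ℝ).prod volume) := by
    have h2 := hskew.comp (MeasureTheory.Measure.measurePreserving_swap
      (μ := (volume : Measure ℝ)) (ν := volume))
    exact h2
  have h3 := (hT.integrable_comp base.1).2 base
  exact h3

lemma grid_tendsto {ρ : ℕ → ℝ} (hρ : Tendsto ρ atTop atTop)
    {a : ℕ → ℤ} {x : ℝ} {c : ℝ}
    (hlow : ∀ n, x ≤ (a n : ℝ) / ρ n) (hupp : ∀ n, (a n : ℝ) / ρ n ≤ x + c / ρ n) :
    Tendsto (fun n => (a n : ℝ) / ρ n) atTop (nhds x) := by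
  have hinv : Tendsto (fun n => (ρ n)⁻¹) atTop (nhds 0) := hρ.inv_tendsto_atTop
  have hupper : Tendsto (fun n => x + c / ρ n) atTop (nhds x) := by
    have : Tendsto (fun n => c / ρ n) atTop (nhds 0) := by
      simpa [div_eq_mul_inv] using hinv.const_mul c
    simpa using tendsto_const_nhds.add this
  exact tendsto_of_tendsto_of_tendsto_of_le_of_le tendsto_const_nhds hupper hlow hupp

lemma grid_low {r x : ℝ} (hr : 0 < r) : x ≤ (⌈r * x⌉ : ℝ) / r := by
  rw [le_div_iff₀ hr]
  have := Int.le_ceil (r * x)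
  linarith [mul_comm x r]

lemma grid_upp {r x : ℝ} (hr : 0 < r) : (⌈r * x⌉ : ℝ) / r ≤ x + 1 / r := by
  rw [div_le_iff₀ hr]
  have := (Int.ceil_lt_add_one (r * x)).le
  have hx : (x + 1 / r) * r = r * x + 1 := by field_simp
  linarith [hx ▸ this]

lemma oneD {g : ℝ → ℝ} (hc : Continuous g) (hnn : ∀ x, 0 ≤ g x)
    (hint : Integrable g) (hanti : AntitoneOn g (Ici (0:ℝ)))
    {ρ : ℕ → ℝ} (hρpos : ∀ n, 0 < ρ n) (hρ : Tendsto ρ atTop atTop)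
    (hnρ : Tendsto (fun n : ℕ => (n : ℝ) / ρ n) atTop atTop) :
    Tendsto (fun n : ℕ => (1 / ρ n) * ∑ k ∈ Finset.Icc (1:ℤ) ((n:ℤ)-1), g ((k:ℝ) / ρ n))
      atTop (nhds (∫ x in Ioi (0:ℝ), g x)) := by
  set F : ℕ → ℝ → ℝ := fun n x => ∑ k ∈ Finset.Icc (1:ℤ) ((n:ℤ)-1),
    (Ioc (((k:ℝ)-1)/ρ n) ((k:ℝ)/ρ n)).indicator (fun _ => g ((k:ℝ)/ρ n)) x with hF
  have key : ∀ n, ∫ x, F n x = (1 / ρ n) * ∑ k ∈ Finset.Icc (1:ℤ) ((n:ℤ)-1), g ((k:ℝ)/ρ n) := by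
    intro n
    rw [hF]
    rw [integral_finset_sum _ (fun k _ => intble_box (hρpos n) k _)]
    simp_rw [integ_box (hρpos n)]
    rw [← Finset.sum_div]
    ring
  have heval : ∀ n x, F n x =
      if ⌈ρ n * x⌉ ∈ Finset.Icc (1:ℤ) ((n:ℤ)-1) then g ((⌈ρ n * x⌉ : ℝ)/ρ n) else 0 := by
    intro n x
    exact eval_int (hρpos n) 1 ((n:ℤ)-1) (fun k => g ((k:ℝ)/ρ n)) x
  have hDCT : Tendsto (fun n => ∫ x, F n x) atTop (nhds (∫ x, (Ioi (0:ℝ)).indicator g x)) := by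
    apply tendsto_integral_filter_of_dominated_convergence ((Ioi (0:ℝ)).indicator g)
    · refine Eventually.of_forall fun n => ?_
      refine (Finset.measurable_sum _ fun k _ => ?_).aestronglyMeasurable
      exact measurable_const.indicator measurableSet_Ioc
    · refine Eventually.of_forall fun n => ae_of_all _ fun x => ?_
      rw [heval]
      by_cases h : ⌈ρ n * x⌉ ∈ Finset.Icc (1:ℤ) ((n:ℤ)-1)
      · rw [if_pos h]
        have h1 : 0 < ⌈ρ n * x⌉ := by
          have := (Finset.mem_Icc.1 h).1; omega
        have hx : 0 < x := by
          have h2 := Int.ceil_pos.1 h1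
          nlinarith [hρpos n]
        rw [Real.norm_eq_abs, abs_of_nonneg (hnn _), Set.indicator_of_mem (mem_Ioi.2 hx)]
        exact hanti hx.le (hx.le.trans (grid_low (hρpos n))) (grid_low (hρpos n))
      · rw [if_neg h]
        simpa using Set.indicator_nonneg (fun y _ => hnn y) x
    · exact hint.indicator measurableSet_Ioi
    · refine ae_of_all _ fun x => ?_
      rcases lt_or_ge 0 x with hx | hx
      · rw [Set.indicator_of_mem (mem_Ioi.2 hx)]
        have hgrid : Tendsto (fun n => (⌈ρ n * x⌉ : ℝ) / ρ n) atTop (nhds x) :=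
          grid_tendsto hρ (fun n => grid_low (hρpos n)) (fun n => grid_upp (hρpos n))
        have hval : Tendsto (fun n => g ((⌈ρ n * x⌉ : ℝ) / ρ n)) atTop (nhds (g x)) :=
          (hc.tendsto x).comp hgrid
        refine hval.congr' ?_
        have h1 : ∀ᶠ n : ℕ in atTop, ρ n * x ≤ (n:ℝ) - 1 := by
          have h2 : ∀ᶠ n : ℕ in atTop, (n:ℝ) / ρ n ≥ x + 2 := hnρ.eventually_ge_atTop (x+2)
          have h3 : ∀ᶠ n : ℕ in atTop, ρ n ≥ 1 := hρ.eventually_ge_atTop 1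
          filter_upwards [h2, h3] with n h2 h3
          have := (le_div_iff₀ (hρpos n)).1 h2
          nlinarith
        filter_upwards [h1] with n h1
        rw [heval, if_pos]
        rw [Finset.mem_Icc]
        constructor
        · exact Int.ceil_pos.2 (mul_pos (hρpos n) hx)
        · rw [Int.ceil_le]; push_cast; linarith
      · have hzero : ∀ n, F n x = 0 := by
          intro n
          rw [heval, if_neg]
          rw [Finset.mem_Icc]
          rintro ⟨h1, -⟩
          have := Int.ceil_pos.1 (by omega : 0 < ⌈ρ n * x⌉)
          nlinarith [hρpos n]
        rw [Set.indicator_of_notMem (by simpa using hx)]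
        simpa [hzero] using tendsto_const_nhds (α := ℝ) (f := atTop (α := ℕ))
  rw [← integral_indicator measurableSet_Ioi]
  exact (funext key ▸ hDCT : _)

lemma grid2_low {r u v : ℝ} (hr : 0 < r) : u + v ≤ ((⌈r*u⌉ + ⌈r*v⌉ : ℤ):ℝ)/r := by
  rw [le_div_iff₀ hr]
  have h1 := Int.le_ceil (r*u); have h2 := Int.le_ceil (r*v)
  push_cast
  nlinarith

lemma grid2_upp {r u v : ℝ} (hr : 0 < r) : ((⌈r*u⌉ + ⌈r*v⌉ : ℤ):ℝ)/r ≤ (u+v) + 2/r := by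
  rw [div_le_iff₀ hr]
  have h1 := Int.ceil_lt_add_one (r*u); have h2 := Int.ceil_lt_add_one (r*v)
  have h3 : 2 / r * r = 2 := div_mul_cancel₀ 2 hr.ne'
  push_cast
  nlinarith

lemma grid1_abs {r u : ℝ} (hr : 1 ≤ r) : |(⌈r*u⌉:ℝ)/r - u| ≤ 1 := by
  have h0 : (0:ℝ) < r := lt_of_lt_of_le one_pos hr
  have hl := grid_low (x := u) h0
  have hu := grid_upp (x := u) h0
  have h1 : 1/r ≤ 1 := by rw [div_le_one h0]; exact hr
  rw [abs_le]; constructor <;> linarith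

lemma grid2_abs {r u v : ℝ} (hr : 1 ≤ r) : |((⌈r*u⌉ + ⌈r*v⌉ : ℤ):ℝ)/r - (u+v)| ≤ 2 := by
  have h0 : (0:ℝ) < r := lt_of_lt_of_le one_pos hr
  have hl := grid2_low (u := u) (v := v) h0
  have hu := grid2_upp (u := u) (v := v) h0
  have h1 : 2/r ≤ 2 := by rw [div_le_iff₀ h0]; nlinarith
  rw [abs_le]; constructor <;> linarith

lemma ind_mul {s : Set ℝ} (x : ℝ) (e : ℝ) :
    (s.indicator (fun _ => (1:ℝ)) x) * e = s.indicator (fun _ => e) x := by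
  by_cases h : x ∈ s <;> simp [h]

lemma twoD {g₂ g₃ : ℝ → ℝ} (hg₂ : Continuous g₂) (hg₃ : Continuous g₃)
    (hg₂_even : ∀ x, g₂ (-x) = g₂ x) (hg₃_even : ∀ x, g₃ (-x) = g₃ x)
    (hg₂_nonneg : ∀ x, 0 ≤ g₂ x) (hg₃_nonneg : ∀ x, 0 ≤ g₃ x)
    (hg₂_int : Integrable g₂) (hg₃_int : Integrable g₃)
    (hg₂_anti : AntitoneOn g₂ (Ici (0:ℝ))) (hg₃_anti : AntitoneOn g₃ (Ici (0:ℝ)))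
    {ρ : ℕ → ℝ} (hρpos : ∀ n, 0 < ρ n) (hρ : Tendsto ρ atTop atTop)
    (hnρ : Tendsto (fun n : ℕ => (n : ℝ) / ρ n) atTop atTop) :
    Tendsto (fun n : ℕ => (1 / (ρ n)^2) * ∑ j ∈ Finset.Icc (1:ℤ) ((n:ℤ)-1),
        ∑ k ∈ Finset.Icc (-(n:ℤ)+1) ((n:ℤ)-1),
          g₂ ((k:ℝ)/ρ n) * g₃ (((k:ℝ)+(j:ℝ))/ρ n))
      atTop (nhds (∫ v in Ioi (0:ℝ), ∫ u, g₂ u * g₃ (u + v))) := by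
  set G₂ : ℝ → ℝ := fun x => g₂ (max (|x| - 1) 0) with hG₂
  set G₃ : ℝ → ℝ := fun x => g₃ (max (|x| - 2) 0) with hG₃
  have hG₂_int : Integrable G₂ := G_integrable hg₂ hg₂_even hg₂_nonneg hg₂_int one_pos.le
  have hG₃_int : Integrable G₃ := G_integrable hg₃ hg₃_even hg₃_nonneg hg₃_int two_pos.le
  have hb_int : Integrable (fun p : ℝ × ℝ => G₂ p.2 * G₃ (p.2 + p.1))
      (volume : Measure (ℝ × ℝ)) := shear_integrable hG₂_int hG₃_int
  set c : ℕ → ℤ → ℤ → ℝ := fun n j k => g₂ ((k:ℝ)/ρ n) * g₃ (((k:ℝ)+(j:ℝ))/ρ n) with hc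
  set H : ℕ → ℝ × ℝ → ℝ := fun n p =>
    ∑ j ∈ Finset.Icc (1:ℤ) ((n:ℤ)-1), ∑ k ∈ Finset.Icc (-(n:ℤ)+1) ((n:ℤ)-1),
      ((Ioc (((j:ℝ)-1)/ρ n) ((j:ℝ)/ρ n)).indicator (fun _ => (1:ℝ)) p.1) *
        ((Ioc (((k:ℝ)-1)/ρ n) ((k:ℝ)/ρ n)).indicator (fun _ => c n j k) p.2) with hH
  set L : ℝ × ℝ → ℝ :=
    fun p => Set.indicator {q : ℝ × ℝ | 0 < q.1} (fun q => g₂ q.2 * g₃ (q.2 + q.1)) p with hL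
  -- integral of H equals the normalized double sum
  have key : ∀ n, ∫ p, H n p = (1 / (ρ n)^2) * ∑ j ∈ Finset.Icc (1:ℤ) ((n:ℤ)-1),
      ∑ k ∈ Finset.Icc (-(n:ℤ)+1) ((n:ℤ)-1), c n j k := by
    intro n
    rw [hH]
    rw [MeasureTheory.Measure.volume_eq_prod]
    have hterm : ∀ (j k : ℤ), Integrable (fun p : ℝ × ℝ =>
        ((Ioc (((j:ℝ)-1)/ρ n) ((j:ℝ)/ρ n)).indicator (fun _ => (1:ℝ)) p.1) *
        ((Ioc (((k:ℝ)-1)/ρ n) ((k:ℝ)/ρ n)).indicator (fun _ => c n j k) p.2))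
        ((volume : Measure ℝ).prod volume) :=
      fun j k => (intble_box (hρpos n) j 1).mul_prod (intble_box (hρpos n) k _)
    rw [integral_finset_sum _ (fun j _ => integrable_finset_sum _ (fun k _ => hterm j k))]
    have : ∀ j ∈ Finset.Icc (1:ℤ) ((n:ℤ)-1),
        (∫ p : ℝ × ℝ, ∑ k ∈ Finset.Icc (-(n:ℤ)+1) ((n:ℤ)-1),
          ((Ioc (((j:ℝ)-1)/ρ n) ((j:ℝ)/ρ n)).indicator (fun _ => (1:ℝ)) p.1) *
          ((Ioc (((k:ℝ)-1)/ρ n) ((k:ℝ)/ρ n)).indicator (fun _ => c n j k) p.2)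
          ∂((volume : Measure ℝ).prod volume))
        = ∑ k ∈ Finset.Icc (-(n:ℤ)+1) ((n:ℤ)-1), (1/ρ n) * (c n j k / ρ n) := by
      intro j _
      rw [integral_finset_sum _ (fun k _ => hterm j k)]
      refine Finset.sum_congr rfl fun k _ => ?_
      rw [MeasureTheory.integral_prod_mul, integ_box (hρpos n), integ_box (hρpos n)]
    rw [Finset.sum_congr rfl this, Finset.mul_sum]
    refine Finset.sum_congr rfl fun j _ => ?_
    rw [Finset.mul_sum]
    refine Finset.sum_congr rfl fun k _ => ?_
    ring
  -- pointwise evaluation of H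
  have heval : ∀ n p, H n p =
      if ⌈ρ n * (p : ℝ × ℝ).1⌉ ∈ Finset.Icc (1:ℤ) ((n:ℤ)-1) then
        (if ⌈ρ n * p.2⌉ ∈ Finset.Icc (-(n:ℤ)+1) ((n:ℤ)-1) then
          c n ⌈ρ n * p.1⌉ ⌈ρ n * p.2⌉ else 0) else 0 := by
    intro n p
    simp only [hH]
    have hinner : ∀ j ∈ Finset.Icc (1:ℤ) ((n:ℤ)-1),
        (∑ k ∈ Finset.Icc (-(n:ℤ)+1) ((n:ℤ)-1),
          ((Ioc (((j:ℝ)-1)/ρ n) ((j:ℝ)/ρ n)).indicator (fun _ => (1:ℝ)) p.1) *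
          ((Ioc (((k:ℝ)-1)/ρ n) ((k:ℝ)/ρ n)).indicator (fun _ => c n j k) p.2))
        = (Ioc (((j:ℝ)-1)/ρ n) ((j:ℝ)/ρ n)).indicator
            (fun _ => if ⌈ρ n * p.2⌉ ∈ Finset.Icc (-(n:ℤ)+1) ((n:ℤ)-1) then
              c n j ⌈ρ n * p.2⌉ else 0) p.1 := by
      intro j _
      rw [← Finset.mul_sum, eval_int (hρpos n) _ _ (fun k => c n j k) p.2, ind_mul]
    rw [Finset.sum_congr rfl hinner, eval_int (hρpos n) _ _
      (fun j => if ⌈ρ n * p.2⌉ ∈ Finset.Icc (-(n:ℤ)+1) ((n:ℤ)-1) then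
        c n j ⌈ρ n * p.2⌉ else 0) p.1]
  -- DCT
  have hDCT : Tendsto (fun n => ∫ p, H n p) atTop (nhds (∫ p, L p)) := by
    apply tendsto_integral_filter_of_dominated_convergence
      (fun p : ℝ × ℝ => G₂ p.2 * G₃ (p.2 + p.1))
    · refine Eventually.of_forall fun n => ?_
      refine (Finset.measurable_sum _ fun j _ => Finset.measurable_sum _ fun k _ => ?_).aestronglyMeasurable
      exact ((measurable_const.indicator measurableSet_Ioc).comp measurable_fst).mul
        ((measurable_const.indicator measurableSet_Ioc).comp measurable_snd)
    · have h3 : ∀ᶠ n : ℕ in atTop, (1:ℝ) ≤ ρ n := hρ.eventually_ge_atTop 1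
      filter_upwards [h3] with n h3
      refine ae_of_all _ fun p => ?_
      rw [heval]
      have hbnn : 0 ≤ G₂ p.2 * G₃ (p.2 + p.1) :=
        mul_nonneg (hg₂_nonneg _) (hg₃_nonneg _)
      by_cases h1 : ⌈ρ n * p.1⌉ ∈ Finset.Icc (1:ℤ) ((n:ℤ)-1)
      · rw [if_pos h1]
        by_cases h2 : ⌈ρ n * p.2⌉ ∈ Finset.Icc (-(n:ℤ)+1) ((n:ℤ)-1)
        · rw [if_pos h2, hc]
          rw [Real.norm_eq_abs, abs_of_nonneg (mul_nonneg (hg₂_nonneg _) (hg₃_nonneg _))]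
          refine mul_le_mul ?_ ?_ (hg₃_nonneg _) (hg₂_nonneg _)
          · exact comp_bound hg₂_even hg₂_anti (grid1_abs h3)
          · have habs : |((⌈ρ n * p.2⌉:ℝ) + (⌈ρ n * p.1⌉:ℝ))/ρ n - (p.2 + p.1)| ≤ 2 := by
              have := grid2_abs (u := p.2) (v := p.1) h3
              push_cast at this
              convert this using 3
            exact comp_bound hg₃_even hg₃_anti habs
        · rw [if_neg h2]; simpa using hbnn
      · rw [if_neg h1]; simpa using hbnn
    · exact hb_int
    · refine ae_of_all _ fun p => ?_
      rcases lt_or_ge 0 p.1 with hv | hv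
      · have hLp : L p = g₂ p.2 * g₃ (p.2 + p.1) :=
          Set.indicator_of_mem (show p ∈ {q : ℝ × ℝ | 0 < q.1} from hv) _
        rw [hLp]
        have hgrid2 : Tendsto (fun n => ((⌈ρ n * p.2⌉ + ⌈ρ n * p.1⌉ : ℤ):ℝ)/ρ n)
            atTop (nhds (p.2 + p.1)) :=
          grid_tendsto hρ (c := 2) (fun n => grid2_low (hρpos n))
            (fun n => grid2_upp (hρpos n))
        have hgrid1 : Tendsto (fun n => (⌈ρ n * p.2⌉:ℝ)/ρ n) atTop (nhds p.2) :=
          grid_tendsto hρ (c := 1) (fun n => grid_low (hρpos n)) (fun n => grid_upp (hρpos n))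
        have hval : Tendsto (fun n => c n ⌈ρ n * p.1⌉ ⌈ρ n * p.2⌉) atTop
            (nhds (g₂ p.2 * g₃ (p.2 + p.1))) := by
          have t2 : Tendsto (fun n => g₃ (((⌈ρ n * p.2⌉:ℝ) + (⌈ρ n * p.1⌉:ℝ))/ρ n)) atTop
              (nhds (g₃ (p.2 + p.1))) := by
            have t3 := (hg₃.tendsto _).comp hgrid2
            refine t3.congr fun n => ?_
            simp only [Function.comp]
            norm_cast
          have t1 : Tendsto (fun n => g₂ ((⌈ρ n * p.2⌉:ℝ)/ρ n)) atTop (nhds (g₂ p.2)) :=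
            (hg₂.tendsto _).comp hgrid1
          simpa [hc] using t1.mul t2
        refine hval.congr' ?_
        have h2 : ∀ᶠ n : ℕ in atTop, (n:ℝ) / ρ n ≥ |p.1| + |p.2| + 2 :=
          hnρ.eventually_ge_atTop _
        have h3 : ∀ᶠ n : ℕ in atTop, (1:ℝ) ≤ ρ n := hρ.eventually_ge_atTop 1
        filter_upwards [h2, h3] with n h2 h3
        have h0 := hρpos n
        have hn : ρ n * (|p.1| + |p.2| + 2) ≤ (n:ℝ) := by
          rw [ge_iff_le, le_div_iff₀ h0] at h2
          nlinarith
        rw [heval, if_pos, if_pos]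
        · rw [Finset.mem_Icc]
          constructor
          · have hlt : -(n:ℤ) < ⌈ρ n * p.2⌉ := by
              rw [Int.lt_ceil]
              push_cast
              nlinarith [neg_abs_le p.2, abs_nonneg p.1]
            omega
          · rw [Int.ceil_le]
            push_cast
            nlinarith [le_abs_self p.2, abs_nonneg p.1]
        · rw [Finset.mem_Icc]
          constructor
          · exact Int.ceil_pos.2 (mul_pos h0 hv)
          · rw [Int.ceil_le]
            push_cast
            nlinarith [le_abs_self p.1, abs_nonneg p.2]
      · have hzero : ∀ n, H n p = 0 := by
          intro n
          rw [heval, if_neg]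
          rw [Finset.mem_Icc]
          rintro ⟨h1, -⟩
          have hle : ⌈ρ n * p.1⌉ ≤ 0 := by
            rw [Int.ceil_le]
            push_cast
            nlinarith [hρpos n]
          omega
        have hLp : L p = 0 :=
          Set.indicator_of_notMem (show p ∉ {q : ℝ × ℝ | 0 < q.1} by simpa using hv) _
        rw [hLp]
        simp only [hzero]
        exact tendsto_const_nhds
  -- identify ∫ L with the iterated integral
  have hL_int : Integrable L (volume : Measure (ℝ × ℝ)) := by
    refine Integrable.mono' hb_int ?_ ?_
    · refine (((hg₂.comp continuous_snd).mul
        (hg₃.comp (continuous_snd.add continuous_fst))).measurable.indicator ?_).aestronglyMeasurable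
      exact measurableSet_lt measurable_const measurable_fst
    · refine ae_of_all _ fun p => ?_
      simp only [hL]
      by_cases h : p ∈ {q : ℝ × ℝ | 0 < q.1}
      · rw [Set.indicator_of_mem h]
        rw [Real.norm_eq_abs, abs_of_nonneg (mul_nonneg (hg₂_nonneg _) (hg₃_nonneg _))]
        refine mul_le_mul ?_ ?_ (hg₃_nonneg _) (hg₂_nonneg _)
        · exact comp_bound hg₂_even hg₂_anti (by simp : |p.2 - p.2| ≤ 1)
        · exact comp_bound hg₃_even hg₃_anti (by simp : |p.2 + p.1 - (p.2 + p.1)| ≤ 2)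
      · rw [Set.indicator_of_notMem h]
        simpa using mul_nonneg (hg₂_nonneg _) (hg₃_nonneg _)
  have hLint_eq : (∫ p, L p) = ∫ v in Ioi (0:ℝ), ∫ u, g₂ u * g₃ (u + v) := by
    rw [MeasureTheory.Measure.volume_eq_prod] at hL_int ⊢
    rw [MeasureTheory.integral_prod _ hL_int]
    have : (fun v => ∫ u, L (v, u)) = (Ioi (0:ℝ)).indicator (fun v => ∫ u, g₂ u * g₃ (u + v)) := by
      funext v
      by_cases hv : 0 < v
      · rw [Set.indicator_of_mem (mem_Ioi.2 hv)]
        congr 1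
        funext u
        exact Set.indicator_of_mem (show ((v,u) : ℝ × ℝ) ∈ {q : ℝ × ℝ | 0 < q.1} from hv) _
      · rw [Set.indicator_of_notMem (by simpa using hv)]
        have : ∀ u : ℝ, L (v, u) = 0 := fun u =>
          Set.indicator_of_notMem (show ((v,u) : ℝ × ℝ) ∉ {q : ℝ × ℝ | 0 < q.1} by simpa using hv) _
        simp [this]
    rw [this, integral_indicator measurableSet_Ioi]
  rw [← hLint_eq]
  have : (fun n : ℕ => (1 / (ρ n)^2) * ∑ j ∈ Finset.Icc (1:ℤ) ((n:ℤ)-1),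
      ∑ k ∈ Finset.Icc (-(n:ℤ)+1) ((n:ℤ)-1), g₂ ((k:ℝ)/ρ n) * g₃ (((k:ℝ)+(j:ℝ))/ρ n))
      = fun n => ∫ p, H n p := by
    funext n
    rw [key n]
  rw [this]
  exact hDCT

lemma sum_nat_int (m : ℕ) (f : ℤ → ℝ) :
    ∑ k ∈ Finset.Icc (1:ℤ) (m:ℤ), f k = ∑ v ∈ Finset.Icc (1:ℕ) m, f (v:ℤ) := by
  refine Finset.sum_nbij' (fun k => k.toNat) (fun v => (v:ℤ)) ?_ ?_ ?_ ?_ ?_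
  · intro k hk
    simp only [Finset.mem_Icc] at hk ⊢
    omega
  · intro v hv
    simp only [Finset.mem_Icc] at hv ⊢
    omega
  · intro k hk
    simp only [Finset.mem_Icc] at hk
    omega
  · intro v hv
    simp only [Finset.mem_Icc] at hv
    omega
  · intro k hk
    simp only [Finset.mem_Icc] at hk
    congr 1
    omega

lemma sum_nat_int' {n : ℕ} (hn : 1 ≤ n) (f : ℤ → ℝ) :
    ∑ k ∈ Finset.Icc (1:ℤ) ((n:ℤ)-1), f k = ∑ v ∈ Finset.Icc (1:ℕ) (n-1), f (v:ℤ) := by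
  rw [(by omega : ((n:ℤ)-1) = ((n - 1 : ℕ):ℤ)), sum_nat_int]

/-- Triple Riemann-sum convergence for the fourth-cumulant bound. -/
theorem triple_riemann_sum (g₁ g₂ g₃ : ℝ → ℝ)
    (hg₁ : Continuous g₁) (hg₂ : Continuous g₂) (hg₃ : Continuous g₃)
    (hg₁_even : ∀ x, g₁ (-x) = g₁ x) (hg₂_even : ∀ x, g₂ (-x) = g₂ x)
    (hg₃_even : ∀ x, g₃ (-x) = g₃ x)
    (hg₁_nonneg : ∀ x, 0 ≤ g₁ x) (hg₂_nonneg : ∀ x, 0 ≤ g₂ x)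
    (hg₃_nonneg : ∀ x, 0 ≤ g₃ x)
    (hg₁_int : Integrable g₁) (hg₂_int : Integrable g₂) (hg₃_int : Integrable g₃)
    (hg₁_anti : AntitoneOn g₁ (Ici (0 : ℝ))) (hg₂_anti : AntitoneOn g₂ (Ici (0 : ℝ)))
    (hg₃_anti : AntitoneOn g₃ (Ici (0 : ℝ)))
    (ρ : ℕ → ℝ) (hρpos : ∀ n, 0 < ρ n)
    (hρ : Tendsto ρ atTop atTop)
    (hnρ : Tendsto (fun n : ℕ => (n : ℝ) / ρ n) atTop atTop) :
    Tendsto (fun n => (1 / (ρ n) ^ 3) *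
        ∑ v₁ ∈ Finset.Icc 1 (n - 1), ∑ v₂ ∈ Finset.Icc 1 (n - 1),
          ∑ u ∈ Finset.Icc (-(n : ℤ) + 1) ((n : ℤ) - 1),
            g₁ ((v₁ : ℝ) / ρ n) * g₂ ((u : ℝ) / ρ n) * g₃ (((u : ℝ) + (v₂ : ℝ)) / ρ n))
      atTop
      (nhds ((∫ v in Ici (0 : ℝ), g₁ v) *
        ∫ v in Ici (0 : ℝ), ∫ u : ℝ, g₂ u * g₃ (u + v))) := by
  have e₁ : (∫ v in Ici (0 : ℝ), g₁ v) = ∫ v in Ioi (0 : ℝ), g₁ v :=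
    integral_Ici_eq_integral_Ioi
  have e₂ : (∫ v in Ici (0 : ℝ), ∫ u : ℝ, g₂ u * g₃ (u + v))
      = ∫ v in Ioi (0 : ℝ), ∫ u : ℝ, g₂ u * g₃ (u + v) := integral_Ici_eq_integral_Ioi
  rw [e₁, e₂]
  have h1 := oneD hg₁ hg₁_nonneg hg₁_int hg₁_anti hρpos hρ hnρ
  have h2 := twoD hg₂ hg₃ hg₂_even hg₃_even hg₂_nonneg hg₃_nonneg hg₂_int hg₃_int
    hg₂_anti hg₃_anti hρpos hρ hnρ
  refine (h1.mul h2).congr' ?_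
  filter_upwards [eventually_ge_atTop 1] with n hn
  have hS1 : (∑ k ∈ Finset.Icc (1:ℤ) ((n:ℤ)-1), g₁ ((k:ℝ) / ρ n))
      = ∑ v₁ ∈ Finset.Icc 1 (n - 1), g₁ ((v₁ : ℝ) / ρ n) := by
    rw [sum_nat_int' hn]
    exact Finset.sum_congr rfl fun v _ => by rw [Int.cast_natCast]
  have hS2 : (∑ j ∈ Finset.Icc (1:ℤ) ((n:ℤ)-1), ∑ k ∈ Finset.Icc (-(n:ℤ)+1) ((n:ℤ)-1),
        g₂ ((k:ℝ)/ρ n) * g₃ (((k:ℝ)+(j:ℝ))/ρ n))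
      = ∑ v₂ ∈ Finset.Icc 1 (n - 1), ∑ u ∈ Finset.Icc (-(n : ℤ) + 1) ((n : ℤ) - 1),
        g₂ ((u : ℝ) / ρ n) * g₃ (((u : ℝ) + (v₂ : ℝ)) / ρ n) := by
    rw [sum_nat_int' hn (f := fun j => ∑ k ∈ Finset.Icc (-(n:ℤ)+1) ((n:ℤ)-1),
      g₂ ((k:ℝ)/ρ n) * g₃ (((k:ℝ)+(j:ℝ))/ρ n))]
    refine Finset.sum_congr rfl fun v _ => Finset.sum_congr rfl fun u _ => ?_
    rw [Int.cast_natCast]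
  have efact : (∑ v₁ ∈ Finset.Icc 1 (n - 1), ∑ v₂ ∈ Finset.Icc 1 (n - 1),
        ∑ u ∈ Finset.Icc (-(n : ℤ) + 1) ((n : ℤ) - 1),
          g₁ ((v₁ : ℝ) / ρ n) * g₂ ((u : ℝ) / ρ n) * g₃ (((u : ℝ) + (v₂ : ℝ)) / ρ n))
      = (∑ v₁ ∈ Finset.Icc 1 (n - 1), g₁ ((v₁ : ℝ) / ρ n)) *
        (∑ v₂ ∈ Finset.Icc 1 (n - 1), ∑ u ∈ Finset.Icc (-(n : ℤ) + 1) ((n : ℤ) - 1),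
          g₂ ((u : ℝ) / ρ n) * g₃ (((u : ℝ) + (v₂ : ℝ)) / ρ n)) := by
    rw [Finset.sum_mul_sum]
    refine Finset.sum_congr rfl fun v₁ _ => Finset.sum_congr rfl fun v₂ _ => ?_
    rw [Finset.mul_sum]
    exact Finset.sum_congr rfl fun u _ => by ring
  rw [hS1, hS2, efact]
  ring
end

section
/- Let p > 1, q > 1. The mean squared error rate exponent for the regular-sampling estimator, 2pq/(p+q+2pq), is strictly less than the Poisson-sampling exponent 2q/(2q+1) for all finite p; the two exponents have equal limit 2q/(2q+1) as p → ∞; and for q non-integer, 2pq/(p+q+2pq) > 2⌊q⌋/(2⌊q⌋+1) if and only if p > q⌊q⌋/(q−⌊q⌋). -/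
open Filter

/-- Comparison of the MSE rate exponents of the regular-sampling estimator,
2pq/(p+q+2pq), and the Poisson-sampling estimator, 2q/(2q+1). -/
theorem rate_exponent_comparison (q : ℝ) (hq : 1 < q) :
    (∀ p : ℝ, 1 < p →
      2 * p * q / (p + q + 2 * p * q) < 2 * q / (2 * q + 1)) ∧
    Tendsto (fun p : ℝ => 2 * p * q / (p + q + 2 * p * q)) atTop
      (nhds (2 * q / (2 * q + 1))) ∧
    (((⌊q⌋ : ℝ) < q) → ∀ p : ℝ, 1 < p →
      (2 * ((⌊q⌋ : ℝ)) / (2 * ((⌊q⌋ : ℝ)) + 1) < 2 * p * q / (p + q + 2 * p * q)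
        ↔ q * (⌊q⌋ : ℝ) / (q - (⌊q⌋ : ℝ)) < p)) := by
  have hq0 : 0 < q := by linarith
  have hden : ∀ p : ℝ, 1 < p → 0 < p + q + 2 * p * q := by
    intro p hp; nlinarith
  have h2q1 : (0:ℝ) < 2 * q + 1 := by linarith
  refine ⟨?_, ?_, ?_⟩
  · intro p hp
    rw [div_lt_div_iff₀ (hden p hp) h2q1]
    nlinarith
  · have hEq : ∀ᶠ p : ℝ in atTop,
        2 * q / (2 * q + 1) - 2 * q ^ 2 / ((2 * q + 1) * (p + q + 2 * p * q))
          = 2 * p * q / (p + q + 2 * p * q) := by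
      filter_upwards [eventually_gt_atTop 1] with p hp
      have hd := hden p hp
      field_simp
      ring
    have hTend : Tendsto (fun p : ℝ => (2 * q + 1) * (p + q + 2 * p * q)) atTop atTop := by
      have h1 : Tendsto (fun p : ℝ => (2 * q + 1) * (1 + 2 * q) * p) atTop atTop :=
        Tendsto.const_mul_atTop (by nlinarith) tendsto_id
      have h2 := tendsto_atTop_add_const_right atTop ((2 * q + 1) * q) h1
      refine h2.congr (fun p => by ring)
    have : Tendsto (fun p : ℝ => 2 * q / (2 * q + 1)
        - 2 * q ^ 2 / ((2 * q + 1) * (p + q + 2 * p * q))) atTop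
        (nhds (2 * q / (2 * q + 1) - 0)) := by
      have h0 : Tendsto (fun p : ℝ => 2 * q ^ 2 / ((2 * q + 1) * (p + q + 2 * p * q)))
          atTop (nhds 0) := by
        have := hTend.inv_tendsto_atTop.const_mul (2 * q ^ 2)
        rw [mul_zero] at this
        exact this.congr (fun p => by simp [div_eq_mul_inv])
      simpa using tendsto_const_nhds.sub h0
    rw [sub_zero] at this
    exact this.congr' hEq
  · intro hfl p hp
    have hm1 : (1:ℝ) ≤ (⌊q⌋ : ℝ) := by
      exact_mod_cast Int.le_floor.mpr (by exact_mod_cast hq.le)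
    have hqm : 0 < q - (⌊q⌋ : ℝ) := by linarith
    rw [div_lt_div_iff₀ (by linarith) (hden p hp), div_lt_iff₀ hqm]
    constructor <;> intro h <;> nlinarith
end
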